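/- Let Δ₀ > 0, C > 0, r̄ ≥ 1 with C ≤ √r̄, and define γ = max{C/√r̄, √(1 - C²/r̄)} ∈ (0,1] (assume γ < 1). Suppose a nonnegative sequence (Δₜ) satisfies Δ₀ ≤ Δ₀ and Δ²_{t+1} ≤ Δₜ² + ηₜ²·r̄ - 2ηₜ·C·Δₜ for all t, where ηₜ = (C/r̄)·γᵗ·Δ₀. Then Δₜ ≤ γᵗ·Δ₀ for all t ≥ 0. -/

import Mathlib

theorem spectral_descent_linear_convergence_recursion
    (C rbar : ℝ) (hrbar : 1 ≤ rbar) (hC : 0 < C) (hCr : C ≤ Real.sqrt rbar)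
    (γ : ℝ) (hγ : γ = max (C / Real.sqrt rbar) (Real.sqrt (1 - C ^ 2 / rbar)))
    (hγlt : γ < 1)
    (Δ : ℕ → ℝ) (hΔpos : 0 < Δ 0) (hΔnonneg : ∀ t, 0 ≤ Δ t)
    (η : ℕ → ℝ) (hη : ∀ t, η t = (C / rbar) * γ ^ t * Δ 0)
    (hrec : ∀ t, (Δ (t + 1)) ^ 2 ≤ (Δ t) ^ 2 + (η t) ^ 2 * rbar - 2 * η t * C * Δ t) :
    ∀ t : ℕ, Δ t ≤ γ ^ t * Δ 0 := by
  have hrpos : (0:ℝ) < rbar := lt_of_lt_of_le one_pos hrbar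
  have hsr : Real.sqrt rbar > 0 := Real.sqrt_pos.2 hrpos
  have hsq : Real.sqrt rbar ^ 2 = rbar := Real.sq_sqrt (le_of_lt hrpos)
  have hC2 : C ^ 2 ≤ rbar := by
    have := pow_le_pow_left₀ (le_of_lt hC) hCr 2
    simpa [hsq] using this
  set a : ℝ := C ^ 2 / rbar with ha
  have ha0 : 0 < a := div_pos (pow_pos hC 2) hrpos
  have ha1 : a ≤ 1 := (div_le_one hrpos).2 hC2
  have hγ0 : 0 < γ := by
    rw [hγ]
    exact lt_max_of_lt_left (div_pos hC hsr)
  have hγ2a : a ≤ γ ^ 2 := by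
    have h1 : C / Real.sqrt rbar ≤ γ := hγ ▸ le_max_left _ _
    have := pow_le_pow_left₀ (le_of_lt (div_pos hC hsr)) h1 2
    calc a = (C / Real.sqrt rbar) ^ 2 := by
            rw [div_pow, hsq]
      _ ≤ γ ^ 2 := this
  have hγ2b : 1 - a ≤ γ ^ 2 := by
    have h1 : Real.sqrt (1 - a) ≤ γ := hγ ▸ le_max_right _ _
    have h2 : (0:ℝ) ≤ 1 - a := by linarith
    have := pow_le_pow_left₀ (Real.sqrt_nonneg _) h1 2
    rwa [Real.sq_sqrt h2] at this
  intro t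
  induction t with
  | zero => simp
  | succ t ih =>
    set B : ℝ := γ ^ t * Δ 0 with hB
    have hBpos : 0 < B := mul_pos (pow_pos hγ0 t) hΔpos
    have hrec' := hrec t
    have hηt : η t = (C / rbar) * B := by rw [hη t, hB]; ring
    have hη2 : (η t) ^ 2 * rbar = a * B ^ 2 := by
      rw [hηt]; field_simp [ha]; ring_nf; rw [ha]; field_simp
    have hηC : η t * C = a * B := by
      rw [hηt]; field_simp [ha]; ring_nf; rw [ha]; field_simp
    have key : (Δ (t+1)) ^ 2 ≤ (Δ t) ^ 2 - 2 * (a * B) * Δ t + a * B ^ 2 := by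
      calc (Δ (t+1)) ^ 2 ≤ (Δ t) ^ 2 + (η t) ^ 2 * rbar - 2 * η t * C * Δ t := hrec'
        _ = (Δ t) ^ 2 - 2 * (a * B) * Δ t + a * B ^ 2 := by
            rw [hη2]; nlinarith [hηC]
    have hΔt : 0 ≤ Δ t := hΔnonneg t
    -- quadratic bound on [0, B]
    have hbound : (Δ (t+1)) ^ 2 ≤ γ ^ 2 * B ^ 2 := by
      have h0 : a * B ^ 2 ≤ γ ^ 2 * B ^ 2 := by nlinarith [sq_nonneg B]
      have h1 : (1 - a) * B ^ 2 ≤ γ ^ 2 * B ^ 2 := by nlinarith [sq_nonneg B]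
      have e : B * ((Δ t) ^ 2 - 2 * (a * B) * Δ t + a * B ^ 2)
          = Δ t * ((1 - a) * B ^ 2) + (B - Δ t) * (a * B ^ 2)
            + B * Δ t * (Δ t - B) := by ring
      have t1 : Δ t * ((1 - a) * B ^ 2) ≤ Δ t * (γ ^ 2 * B ^ 2) :=
        mul_le_mul_of_nonneg_left h1 hΔt
      have t2 : (B - Δ t) * (a * B ^ 2) ≤ (B - Δ t) * (γ ^ 2 * B ^ 2) :=
        mul_le_mul_of_nonneg_left h0 (sub_nonneg.2 ih)
      have t3 : B * Δ t * (Δ t - B) ≤ 0 :=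
        mul_nonpos_of_nonneg_of_nonpos (mul_nonneg hBpos.le hΔt)
          (sub_nonpos.2 ih)
      have e2 : Δ t * (γ ^ 2 * B ^ 2) + (B - Δ t) * (γ ^ 2 * B ^ 2)
          = B * (γ ^ 2 * B ^ 2) := by ring
      have hmul : B * ((Δ t) ^ 2 - 2 * (a * B) * Δ t + a * B ^ 2)
          ≤ B * (γ ^ 2 * B ^ 2) := by linarith
      have := (mul_le_mul_iff_right₀ hBpos).1 hmul
      linarith [key]
    have hgoal : γ ^ (t+1) * Δ 0 = γ * B := by rw [hB]; ring
    rw [hgoal]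
    have hb2 : (Δ (t+1)) ^ 2 ≤ (γ * B) ^ 2 := by
      rw [mul_pow]; exact hbound
    exact (pow_le_pow_iff_left₀ (hΔnonneg _) (mul_pos hγ0 hBpos).le
      two_ne_zero).1 hb2
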